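/- Let x ∈ X and γ > 0, let x⁺ be the generalized projection of x with g = ∇f(x), satisfying its first-order optimality condition (there exists p ∈ ∂h(x⁺) with ⟨∇f(x) + (1/γ)(∇ω(x⁺) − ∇ω(x)) + p, u − x⁺⟩ ≥ 0 for all u ∈ X), and set g_X = P_X(x, ∇f(x), γ) = (x − x⁺)/γ. Then Ψ(x⁺) ≤ Ψ(x) − (αγ − (L/2)γ²)‖g_X‖². -/

import Mathlib

open RealInnerProductSpace

/-- Descent lemma on a convex set. -/
lemma descent_lemma_aux
    {E : Type*} [NormedAddCommGroup E] [InnerProductSpace ℝ E] [CompleteSpace E]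
    (X : Set E) (hXcv : Convex ℝ X)
    (f : E → ℝ) (f' : E → E) (hf' : ∀ x ∈ X, HasGradientAt f (f' x) x)
    (L : ℝ) (hL : 0 < L)
    (hLip : ∀ x ∈ X, ∀ y ∈ X, ‖f' y - f' x‖ ≤ L * ‖y - x‖)
    (x : E) (hx : x ∈ X) (y : E) (hy : y ∈ X) :
    f y ≤ f x + ⟪f' x, y - x⟫ + L / 2 * ‖y - x‖ ^ 2 := by
  set d := y - x with hd
  have hmem : ∀ t ∈ Set.Icc (0:ℝ) 1, x + t • d ∈ X := by
    intro t ht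
    have := hXcv hx hy (by linarith [ht.1, ht.2] : (0:ℝ) ≤ 1 - t) ht.1 (by ring)
    convert this using 1
    simp [hd]; module
  set g : ℝ → ℝ := fun t => f (x + t • d) - t * ⟪f' x, d⟫ - t ^ 2 * (L / 2) * ‖d‖ ^ 2 with hg
  have hder : ∀ t ∈ Set.Icc (0:ℝ) 1, HasDerivAt g
      (⟪f' (x + t • d), d⟫ - ⟪f' x, d⟫ - 2 * t * (L / 2) * ‖d‖ ^ 2) t := by
    intro t ht
    have h1 : HasDerivAt (fun t : ℝ => x + t • d) d t := by
      simpa using ((hasDerivAt_id t).smul_const d).const_add x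
    have h2 : HasFDerivAt f (InnerProductSpace.toDual ℝ E (f' (x + t • d))) (x + t • d) :=
      (hf' _ (hmem t ht)).hasFDerivAt
    have h3 : HasDerivAt (fun t : ℝ => f (x + t • d)) ⟪f' (x + t • d), d⟫ t := by
      have h3' := h2.comp_hasDerivAt t h1
      simp at h3'
      exact h3'
    have h4 : HasDerivAt (fun t : ℝ => t * ⟪f' x, d⟫) ⟪f' x, d⟫ t := by
      simpa using (hasDerivAt_id t).mul_const ⟪f' x, d⟫
    have h5 : HasDerivAt (fun t : ℝ => t ^ 2 * (L / 2) * ‖d‖ ^ 2)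
        (2 * t * (L / 2) * ‖d‖ ^ 2) t := by
      have := ((hasDerivAt_pow 2 t).mul_const (L / 2)).mul_const (‖d‖ ^ 2)
      simpa [mul_comm, mul_assoc, mul_left_comm] using this
    exact (h3.sub h4).sub h5
  have hanti : AntitoneOn g (Set.Icc 0 1) := by
    apply antitoneOn_of_deriv_nonpos (convex_Icc 0 1)
    · exact fun t ht => (hder t ht).continuousAt.continuousWithinAt
    · intro t ht
      rw [interior_Icc] at ht
      exact ((hder t (Set.mem_Icc_of_Ioo ht)).differentiableAt).differentiableWithinAt
    · intro t ht
      rw [interior_Icc] at ht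
      rw [(hder t (Set.mem_Icc_of_Ioo ht)).deriv]
      have hb : ⟪f' (x + t • d) - f' x, d⟫ ≤ L * t * ‖d‖ ^ 2 := by
        calc ⟪f' (x + t • d) - f' x, d⟫ ≤ ‖f' (x + t • d) - f' x‖ * ‖d‖ :=
              real_inner_le_norm _ _
          _ ≤ (L * ‖(x + t • d) - x‖) * ‖d‖ := by
              gcongr; exact hLip x hx _ (hmem t (Set.mem_Icc_of_Ioo ht))
          _ = L * t * ‖d‖ ^ 2 := by
              rw [show x + t • d - x = t • d by abel, norm_smul]
              simp [abs_of_nonneg ht.1.le]; ring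
      have := inner_sub_left (𝕜 := ℝ) (f' (x + t • d)) (f' x) d
      nlinarith [this]
  have h01 := hanti (Set.left_mem_Icc.mpr zero_le_one) (Set.right_mem_Icc.mpr zero_le_one) zero_le_one
  simp only [hg] at h01
  norm_num at h01
  have : x + d = y := by simp [hd]
  rw [this] at h01
  linarith


/-- One step of the projected gradient method decreases `Ψ = f + h`:
`Ψ(x⁺) ≤ Ψ(x) - (αγ - (L/2)γ²) ‖g_X‖²` where `g_X = P_X(x, ∇f(x), γ) = (x - x⁺)/γ`. -/
theorem projected_gradient_step_descent
    {E : Type*} [NormedAddCommGroup E] [InnerProductSpace ℝ E] [FiniteDimensional ℝ E]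
    (X : Set E) (hXne : X.Nonempty) (hXcl : IsClosed X) (hXcv : Convex ℝ X)
    (h : E → ℝ) (hh : ConvexOn ℝ X h)
    (w : E → ℝ) (gw : E → E) (hgw : ∀ x ∈ X, HasGradientAt w (gw x) x)
    (α : ℝ) (hα : 0 < α)
    (hsc : ∀ x ∈ X, ∀ z ∈ X, α * ‖x - z‖ ^ 2 ≤ ⟪x - z, gw x - gw z⟫)
    (f : E → ℝ) (f' : E → E) (hf' : ∀ x ∈ X, HasGradientAt f (f' x) x)
    (L : ℝ) (hL : 0 < L)
    (hLip : ∀ x ∈ X, ∀ y ∈ X, ‖f' y - f' x‖ ≤ L * ‖y - x‖)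
    (x : E) (hx : x ∈ X) (γ : ℝ) (hγ : 0 < γ)
    (xp : E) (hxp : xp ∈ X)
    -- x⁺ is a minimizer over u ∈ X of ⟨∇f(x), u⟩ + (1/γ) V(u, x) + h(u)
    (hmin : ∀ u ∈ X,
      ⟪f' x, xp⟫ + (1 / γ) * (w xp - w x - ⟪gw x, xp - x⟫) + h xp ≤
        ⟪f' x, u⟫ + (1 / γ) * (w u - w x - ⟪gw x, u - x⟫) + h u)
    -- the first-order optimality condition at x⁺ with some p ∈ ∂h(x⁺)
    (p : E) (hp : ∀ u ∈ X, h xp + ⟪p, u - xp⟫ ≤ h u)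
    (hopt : ∀ u ∈ X, 0 ≤ ⟪f' x + (1 / γ) • (gw xp - gw x) + p, u - xp⟫) :
    f xp + h xp ≤ (f x + h x) - (α * γ - (L / 2) * γ ^ 2) * ‖(1 / γ) • (x - xp)‖ ^ 2 := by
  have hdesc := descent_lemma_aux X hXcv f f' hf' L hL hLip x hx xp hxp
  have hoptx := hopt x hx
  rw [inner_add_left, inner_add_left, real_inner_smul_left] at hoptx
  have hsc' := hsc xp hxp x hx
  have hinner : ⟪gw xp - gw x, x - xp⟫ = -⟪xp - x, gw xp - gw x⟫ := by
    rw [show x - xp = -(xp - x) by abel, inner_neg_right, real_inner_comm]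
  have hpx := hp x hx
  -- norms
  have hnorm : ‖(1 / γ) • (x - xp)‖ ^ 2 = (1 / γ) ^ 2 * ‖x - xp‖ ^ 2 := by
    rw [norm_smul]; simp [abs_of_pos hγ]; ring
  have hnxy : ‖xp - x‖ = ‖x - xp‖ := norm_sub_rev _ _
  have hfi : ⟪f' x, xp - x⟫ = -⟪f' x, x - xp⟫ := by
    rw [show xp - x = -(x - xp) by abel, inner_neg_right]
  rw [hnorm]
  rw [hnxy, hfi] at hdesc
  rw [hinner] at hoptx
  have hγ2 : (0:ℝ) < γ ^ 2 := by positivity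
  have key : (α / γ) * ‖x - xp‖ ^ 2 ≤ (1 / γ) * ⟪xp - x, gw xp - gw x⟫ := by
    rw [← hnxy]
    have h0 : (0:ℝ) < 1 / γ := by positivity
    calc α / γ * ‖xp - x‖ ^ 2 = (1 / γ) * (α * ‖xp - x‖ ^ 2) := by ring
      _ ≤ (1 / γ) * ⟪xp - x, gw xp - gw x⟫ := by nlinarith [hsc']
  have expand : (α * γ - L / 2 * γ ^ 2) * ((1 / γ) ^ 2 * ‖x - xp‖ ^ 2)
      = (α / γ - L / 2) * ‖x - xp‖ ^ 2 := by
    field_simp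
  rw [expand]
  nlinarith [hoptx, hpx, hdesc, key]
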